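/- The target Fock state is a fixed point of the Kraus map: M_g|n̄⟩ = 0, M_m|n̄⟩ = 0 and M_e|n̄⟩ = −|n̄⟩, and consequently Φ(|n̄⟩⟨n̄|) = |n̄⟩⟨n̄|. -/

import Mathlib

open Matrix
open scoped ComplexOrder

noncomputable section

/-- α(n) = π·√((n+1)/(n̄+1)) -/
def alphaAng (nbar n : ℕ) : ℝ := Real.pi * Real.sqrt (((n : ℝ) + 1) / ((nbar : ℝ) + 1))

/-- β(n) = θ₂·√n/2 -/
def betaAng (θ₂ : ℝ) (n : ℕ) : ℝ := θ₂ * Real.sqrt (n : ℝ) / 2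

/-- generic two-step recursive sequence with initial values 0, 1 -/
def seq2 (step : ℕ → ℝ → ℝ → ℝ) : ℕ → ℝ
  | 0 => 0
  | 1 => 1
  | (j+2) => step j (seq2 step (j+1)) (seq2 step j)

def fLow (nbar : ℕ) (θ₂ η : ℝ) : ℕ → ℝ :=
  seq2 (fun j x y => x + η * (Real.sin (alphaAng nbar (nbar - (j+1)) / 2))^2 *
    (Real.cos (betaAng θ₂ (nbar - (j+1)) / 2))^2 * (x - y))

def fHigh (nbar : ℕ) (θ₂ η : ℝ) : ℕ → ℝ :=
  seq2 (fun j x y => x + η * (Real.sin (betaAng θ₂ (nbar + (j+1)) / 2))^2 * (x - y))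

def fLyap (nbar : ℕ) (θ₂ η : ℝ) (n : ℕ) : ℝ :=
  if n ≤ nbar then fLow nbar θ₂ η (nbar - n) else fHigh nbar θ₂ η (n - nbar)

def Mg (nbar : ℕ) (θ₂ : ℝ) : Matrix (Fin (4*nbar+4)) (Fin (4*nbar+4)) ℂ :=
  fun i j => if (i : ℕ) = (j : ℕ) + 1
    then Complex.ofReal ((Real.cos (betaAng θ₂ (j : ℕ) / 2))^2 * Real.sin (alphaAng nbar (j : ℕ)))
    else 0

def Me (nbar : ℕ) (θ₂ : ℝ) : Matrix (Fin (4*nbar+4)) (Fin (4*nbar+4)) ℂ :=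
  fun i j => if i = j
    then Complex.ofReal ((Real.cos (alphaAng nbar (j : ℕ) / 2))^2 * Real.cos (betaAng θ₂ (j : ℕ))
      - (Real.sin (alphaAng nbar (j : ℕ) / 2))^2)
    else 0

def Mm (nbar : ℕ) (θ₂ : ℝ) : Matrix (Fin (4*nbar+4)) (Fin (4*nbar+4)) ℂ :=
  fun i j => if (i : ℕ) + 1 = (j : ℕ)
    then Complex.ofReal (Real.sin (betaAng θ₂ (j : ℕ)) * Real.cos (alphaAng nbar (j : ℕ) / 2))
    else 0

def PhiK (nbar : ℕ) (θ₂ : ℝ) (ρ : Matrix (Fin (4*nbar+4)) (Fin (4*nbar+4)) ℂ) :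
    Matrix (Fin (4*nbar+4)) (Fin (4*nbar+4)) ℂ :=
  Mg nbar θ₂ * ρ * (Mg nbar θ₂)ᴴ + Me nbar θ₂ * ρ * (Me nbar θ₂)ᴴ + Mm nbar θ₂ * ρ * (Mm nbar θ₂)ᴴ

/-- Hypothesis (H) -/
def HypH (nbar : ℕ) (θ₂ : ℝ) : Prop :=
  ∀ n k : ℕ, 1 ≤ n → n ≤ 4*nbar+3 → θ₂ ≠ (k : ℝ) * Real.pi / Real.sqrt (n : ℝ)

def dCoef (nbar : ℕ) (θ₂ : ℝ) (n : ℕ) : ℝ :=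
  (Real.sin (betaAng θ₂ n))^2 * (Real.cos (alphaAng nbar n / 2))^2

def eCoef (nbar : ℕ) (θ₂ : ℝ) (n : ℕ) : ℝ :=
  (Real.sin (alphaAng nbar n))^2 * (Real.cos (betaAng θ₂ n / 2))^4

def qCoef (nbar : ℕ) (θ₂ η : ℝ) (n : ℕ) : ℝ :=
  if n < nbar then
    (Real.sin (alphaAng nbar n))^2 * (Real.cos (betaAng θ₂ n / 2))^4 *
      (η * (Real.sin (betaAng θ₂ n / 2))^2 - 1) * (fLyap nbar θ₂ η n - fLyap nbar θ₂ η (n+1))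
  else if n = nbar then 0
  else
    (Real.sin (betaAng θ₂ n))^2 * (Real.cos (alphaAng nbar n / 2))^2 *
      (η * (Real.sin (alphaAng nbar n / 2))^2 * (Real.cos (betaAng θ₂ n / 2))^2 - 1) *
      (fLyap nbar θ₂ η n - fLyap nbar θ₂ η (n-1))


lemma alpha_nbar_eq_pi (nbar : ℕ) : alphaAng nbar nbar = Real.pi := by
  unfold alphaAng
  rw [div_self (by positivity), Real.sqrt_one, mul_one]

lemma Mg_col (nbar : ℕ) (θ₂ : ℝ) (b i : Fin (4*nbar+4)) (hb : (b : ℕ) = nbar) :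
    Mg nbar θ₂ i b = 0 := by
  have : Real.sin (alphaAng nbar (b : ℕ)) = 0 := by
    rw [hb, alpha_nbar_eq_pi, Real.sin_pi]
  simp [Mg, this]

lemma Mm_col (nbar : ℕ) (θ₂ : ℝ) (b i : Fin (4*nbar+4)) (hb : (b : ℕ) = nbar) :
    Mm nbar θ₂ i b = 0 := by
  have : Real.cos (alphaAng nbar (b : ℕ) / 2) = 0 := by
    rw [hb, alpha_nbar_eq_pi, Real.cos_pi_div_two]
  simp [Mm, this]

lemma Me_col (nbar : ℕ) (θ₂ : ℝ) (b i : Fin (4*nbar+4)) (hb : (b : ℕ) = nbar) :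
    Me nbar θ₂ i b = if i = b then -1 else 0 := by
  have h1 : Real.cos (alphaAng nbar (b : ℕ) / 2) = 0 := by
    rw [hb, alpha_nbar_eq_pi, Real.cos_pi_div_two]
  have h2 : Real.sin (alphaAng nbar (b : ℕ) / 2) = 1 := by
    rw [hb, alpha_nbar_eq_pi, Real.sin_pi_div_two]
  simp only [Me, h1, h2]
  norm_num

/-- the target Fock state is a fixed point of the Kraus map:
M_g|n̄⟩ = 0, M_m|n̄⟩ = 0, M_e|n̄⟩ = −|n̄⟩, and Φ(|n̄⟩⟨n̄|) = |n̄⟩⟨n̄|. -/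
theorem target_fixed_point (nbar : ℕ) (θ₂ : ℝ) :
    (Mg nbar θ₂).mulVec (Pi.single (⟨nbar, by omega⟩ : Fin (4*nbar+4)) 1) = 0 ∧
    (Mm nbar θ₂).mulVec (Pi.single (⟨nbar, by omega⟩ : Fin (4*nbar+4)) 1) = 0 ∧
    (Me nbar θ₂).mulVec (Pi.single (⟨nbar, by omega⟩ : Fin (4*nbar+4)) 1)
      = -(Pi.single (⟨nbar, by omega⟩ : Fin (4*nbar+4)) 1) ∧
    PhiK nbar θ₂ (Matrix.single (⟨nbar, by omega⟩ : Fin (4*nbar+4)) ⟨nbar, by omega⟩ 1)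
      = Matrix.single (⟨nbar, by omega⟩ : Fin (4*nbar+4)) ⟨nbar, by omega⟩ 1 := by
  classical
  have hva : ((⟨nbar, by omega⟩ : Fin (4*nbar+4)) : ℕ) = nbar := rfl
  set a : Fin (4*nbar+4) := ⟨nbar, by omega⟩
  have hg : ∀ i, Mg nbar θ₂ i a = 0 := fun i => Mg_col nbar θ₂ a i hva
  have hm : ∀ i, Mm nbar θ₂ i a = 0 := fun i => Mm_col nbar θ₂ a i hva
  have he : ∀ i, Me nbar θ₂ i a = if i = a then -1 else 0 :=
    fun i => Me_col nbar θ₂ a i hva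
  refine ⟨?_, ?_, ?_, ?_⟩
  · funext i; simp [hg i]
  · funext i; simp [hm i]
  · funext i
    rw [Matrix.mulVec_single]
    simp only [Pi.smul_apply, Matrix.col_apply, op_smul_eq_mul]
    by_cases h : i = a
    · rw [he i, if_pos h, h, Pi.neg_apply, Pi.single_eq_same]; ring
    · rw [he i, if_neg h, Pi.neg_apply, Pi.single_eq_of_ne h]; ring
  · set E : Matrix (Fin (4*nbar+4)) (Fin (4*nbar+4)) ℂ := Matrix.single a a 1 with hE
    have hEapp : ∀ i j, E i j = if i = a ∧ j = a then 1 else 0 := by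
      intro i j
      rw [hE, Matrix.single]
      simp only [Matrix.of_apply]
      by_cases h1 : i = a <;> by_cases h2 : j = a <;>
        simp [h1, h2, eq_comm]
    have hMgE : Mg nbar θ₂ * E = 0 := by
      ext i j
      rw [Matrix.mul_apply]
      apply Finset.sum_eq_zero
      intro k _
      rw [hEapp]
      by_cases h : k = a ∧ j = a
      · rw [if_pos h, h.1, hg i]; ring
      · rw [if_neg h, mul_zero]
    have hMmE : Mm nbar θ₂ * E = 0 := by
      ext i j
      rw [Matrix.mul_apply]
      apply Finset.sum_eq_zero
      intro k _
      rw [hEapp]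
      by_cases h : k = a ∧ j = a
      · rw [if_pos h, h.1, hm i]; ring
      · rw [if_neg h, mul_zero]
    have hMeE : Me nbar θ₂ * E = -E := by
      ext i j
      rw [Matrix.mul_apply, Matrix.neg_apply, hEapp]
      rw [Finset.sum_eq_single a]
      · rw [hEapp, he i]
        by_cases h1 : i = a <;> by_cases h2 : j = a <;>
          simp [h1, h2]
      · intro k _ hk
        rw [hEapp, if_neg (by tauto), mul_zero]
      · intro hmem
        exact absurd (Finset.mem_univ a) hmem
    have hEMe : E * (Me nbar θ₂)ᴴ = -E := by
      ext i j
      rw [Matrix.mul_apply, Matrix.neg_apply, hEapp]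
      rw [Finset.sum_eq_single a]
      · rw [hEapp, Matrix.conjTranspose_apply, he j]
        by_cases h1 : i = a <;> by_cases h2 : j = a <;>
          simp [h1, h2]
      · intro k _ hk
        rw [hEapp, if_neg (by tauto), zero_mul]
      · intro hmem
        exact absurd (Finset.mem_univ a) hmem
    show Mg nbar θ₂ * E * (Mg nbar θ₂)ᴴ + Me nbar θ₂ * E * (Me nbar θ₂)ᴴ
        + Mm nbar θ₂ * E * (Mm nbar θ₂)ᴴ = E
    rw [hMgE, hMmE, hMeE, Matrix.zero_mul, Matrix.zero_mul, Matrix.neg_mul, hEMe]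
    simp
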